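/- Let (E, σ) be a finite-dimensional real symplectic vector space. Then there exists a linear endomorphism J of E such that J ∘ J = −id_E, σ(Jx, Jy) = σ(x, y) for all x, y ∈ E, and the bilinear form g(x, y) = σ(x, Jy) is symmetric and positive definite. In particular, E carries a complex vector space structure (with i acting as J) adapted to σ, and a positive definite inner product whose associated structure has σ as compatible form. -/

import Mathlib

open Module

universe u

theorem aux (n : ℕ) :
    ∀ (E : Type u) [AddCommGroup E] [Module ℝ E] [FiniteDimensional ℝ E]
      (σ : E →ₗ[ℝ] E →ₗ[ℝ] ℝ), finrank ℝ E = n →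
      (∀ x : E, σ x x = 0) → (∀ x : E, (∀ y : E, σ x y = 0) → x = 0) →
      ∃ J : E →ₗ[ℝ] E,
        (∀ x : E, J (J x) = -x) ∧
        (∀ x y : E, σ (J x) (J y) = σ x y) ∧
        (∀ x y : E, σ x (J y) = σ y (J x)) ∧
        (∀ x : E, x ≠ 0 → 0 < σ x (J x)) := by
  induction n using Nat.strong_induction_on with
  | _ n IH =>
    intro E _ _ _ σ hdim halt hnd
    have hskew : ∀ x y : E, σ x y = -σ y x := by
      intro x y
      have h := halt (x + y)
      simp only [map_add, LinearMap.add_apply, halt] at h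
      linarith
    by_cases htriv : ∀ x : E, x = 0
    · refine ⟨0, fun x => by simp [htriv x], fun x y => by simp [htriv x, htriv y],
        fun x y => by simp [htriv x, htriv y], fun x hx => absurd (htriv x) hx⟩
    · push_neg at htriv
      obtain ⟨e0, he0⟩ := htriv
      have hne : ¬ ∀ y : E, σ e0 y = 0 := fun h => he0 (hnd e0 h)
      push_neg at hne
      obtain ⟨f0, hf0⟩ := hne
      obtain ⟨e, f, hef⟩ : ∃ e f : E, σ e f = 1 :=
        ⟨e0, (σ e0 f0)⁻¹ • f0, by simp [inv_mul_cancel₀ hf0]⟩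
      have hfe : σ f e = -1 := by rw [hskew f e, hef]
      have hee : σ e e = 0 := halt e
      have hff : σ f f = 0 := halt f
      obtain ⟨W, hmemW⟩ : ∃ W : Submodule ℝ E, ∀ x : E, x ∈ W ↔ σ e x = 0 ∧ σ f x = 0 :=
        ⟨LinearMap.ker (σ e) ⊓ LinearMap.ker (σ f), fun x => by
          simp [LinearMap.mem_ker]⟩
      obtain ⟨a, b, haapp, hbapp⟩ :
          ∃ (a b : E →ₗ[ℝ] ℝ), (∀ x : E, a x = σ x f) ∧ (∀ x : E, b x = σ e x) :=
        ⟨σ.flip f, σ e, fun _ => rfl, fun _ => rfl⟩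
      have hae : a e = 1 := by rw [haapp, hef]
      have haf : a f = 0 := by rw [haapp, hff]
      have hbe : b e = 0 := by rw [hbapp, hee]
      have hbf : b f = 1 := by rw [hbapp, hef]
      have hproj : ∀ x : E, x - a x • e - b x • f ∈ W := by
        intro x
        rw [hmemW]
        refine ⟨?_, ?_⟩
        · simp only [map_sub, map_smul, smul_eq_mul, hee, hef, hbapp]
          ring
        · simp only [map_sub, map_smul, smul_eq_mul, hfe, hff, haapp]
          have h1 := hskew f x
          have h2 := hskew x f
          ring_nf
          linarith
      obtain ⟨π, hπapp⟩ : ∃ π : E →ₗ[ℝ] W, ∀ x : E, (π x : E) = x - a x • e - b x • f :=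
        ⟨LinearMap.codRestrict W (LinearMap.id - a.smulRight e - b.smulRight f)
          (fun c => by simpa [LinearMap.sub_apply, LinearMap.smulRight_apply] using hproj c),
          fun x => by simp [LinearMap.codRestrict_apply, LinearMap.sub_apply,
            LinearMap.smulRight_apply, LinearMap.id_apply]⟩
      -- key facts about W
      have hWe : ∀ w : W, σ e (w : E) = 0 := fun w => ((hmemW w).mp w.2).1
      have hWf : ∀ w : W, σ f (w : E) = 0 := fun w => ((hmemW w).mp w.2).2
      have hWe' : ∀ w : W, σ (w : E) e = 0 := fun w => by rw [hskew, hWe w, neg_zero]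
      have hWf' : ∀ w : W, σ (w : E) f = 0 := fun w => by rw [hskew, hWf w, neg_zero]
      have haW : ∀ w : W, a (w : E) = 0 := fun w => by rw [haapp, hWf' w]
      have hbW : ∀ w : W, b (w : E) = 0 := fun w => by rw [hbapp, hWe w]
      -- canonical decomposition
      have hdecomp : ∀ x : E, x = a x • e + b x • f + ((π x : E)) := by
        intro x; rw [hπapp]; abel
      -- coordinates of a canonical form
      have hcoorda : ∀ (s t : ℝ) (w : W), a (s • e + t • f + (w : E)) = s := by
        intro s t w; simp [map_add, map_smul, hae, haf, haW w]
      have hcoordb : ∀ (s t : ℝ) (w : W), b (s • e + t • f + (w : E)) = t := by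
        intro s t w; simp [map_add, map_smul, hbe, hbf, hbW w]
      have hcoordπ : ∀ (s t : ℝ) (w : W), π (s • e + t • f + (w : E)) = w := by
        intro s t w
        have : (π (s • e + t • f + (w : E)) : E) = (w : E) := by
          rw [hπapp, hcoorda, hcoordb]; abel
        exact Subtype.ext this
      -- bilinear expansion
      have hexp : ∀ (s t s' t' : ℝ) (w w' : W),
          σ (s • e + t • f + (w : E)) (s' • e + t' • f + (w' : E))
            = s * t' - t * s' + σ (w : E) (w' : E) := by
        intro s t s' t' w w'
        simp only [map_add, map_smul, LinearMap.add_apply, LinearMap.smul_apply,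
          smul_eq_mul, hee, hef, hfe, hff, hWe, hWf, hWe', hWf']
        ring
      -- W is a proper subspace
      have hWlt : finrank ℝ W < n := by
        rw [← hdim]
        refine Submodule.finrank_lt ?_
        intro h
        have heW : e ∈ W := h ▸ Submodule.mem_top
        have := ((hmemW e).mp heW).2
        rw [hfe] at this
        norm_num at this
      -- restricted form
      obtain ⟨σ', hσ'app⟩ : ∃ σ' : W →ₗ[ℝ] W →ₗ[ℝ] ℝ,
          ∀ w v : W, σ' w v = σ (w : E) (v : E) :=
        ⟨σ.compl₁₂ W.subtype W.subtype, fun w v => rfl⟩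
      have halt' : ∀ w : W, σ' w w = 0 := fun w => by rw [hσ'app]; exact halt _
      have hnd' : ∀ w : W, (∀ v : W, σ' w v = 0) → w = 0 := by
        intro w hw
        have hcan : (w : E) = (0 : ℝ) • e + (0 : ℝ) • f + (w : E) := by simp
        have : (w : E) = 0 := by
          apply hnd
          intro y
          conv_lhs => rw [hcan, hdecomp y]
          rw [hexp]
          have := hw (π y)
          rw [hσ'app] at this
          rw [this]
          ring
        exact Subtype.ext this
      obtain ⟨J', hJ1, hJ2, hJ3, hJ4⟩ := IH (finrank ℝ W) hWlt W σ' rfl halt' hnd'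
      obtain ⟨J, hJapp⟩ : ∃ J : E →ₗ[ℝ] E,
          ∀ x : E, J x = (-(b x)) • e + a x • f + ((J' (π x) : E)) :=
        ⟨a.smulRight f - b.smulRight e + W.subtype ∘ₗ J' ∘ₗ π, fun x => by
          simp only [LinearMap.add_apply, LinearMap.sub_apply, LinearMap.smulRight_apply,
            LinearMap.coe_comp, Function.comp_apply, Submodule.coe_subtype, neg_smul]
          abel⟩
      refine ⟨J, ?_, ?_, ?_, ?_⟩
      · -- J ∘ J = -id
        intro x
        rw [hJapp (J x), hJapp x, hcoorda, hcoordb, hcoordπ, hJ1]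
        conv_rhs => rw [hdecomp x]
        push_cast
        module
      · -- σ (J x) (J y) = σ x y
        intro x y
        have h2 := hJ2 (π x) (π y)
        rw [hσ'app, hσ'app] at h2
        conv_lhs => rw [hJapp x, hJapp y]
        conv_rhs => rw [hdecomp x, hdecomp y]
        rw [hexp, hexp, h2]
        ring
      · -- symmetry
        intro x y
        have h3 := hJ3 (π x) (π y)
        rw [hσ'app, hσ'app] at h3
        conv_lhs => rw [hdecomp x, hJapp y]
        conv_rhs => rw [hdecomp y, hJapp x]
        rw [hexp, hexp]
        rw [h3]
        ring
      · -- positivity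
        intro x hx
        have key : σ x (J x) = a x * a x + b x * b x + σ' (π x) (J' (π x)) := by
          calc σ x (J x)
              = σ (a x • e + b x • f + ((π x : E)))
                  ((-(b x)) • e + a x • f + ((J' (π x) : E))) := by
                rw [← hdecomp x, ← hJapp x]
            _ = a x * a x + b x * b x + σ' (π x) (J' (π x)) := by
                rw [hexp, hσ'app]; ring
        rw [key]
        by_cases hπ : π x = 0
        · have hz : σ' (π x) (J' (π x)) = 0 := by rw [hπ]; simp
          rw [hz]
          have hab : a x ≠ 0 ∨ b x ≠ 0 := by
            by_contra hc
            push_neg at hc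
            apply hx
            rw [hdecomp x, hc.1, hc.2, hπ]
            simp
          rcases hab with h | h
          · nlinarith [mul_self_pos.mpr h, mul_self_nonneg (b x)]
          · nlinarith [mul_self_pos.mpr h, mul_self_nonneg (a x)]
        · have := hJ4 (π x) hπ
          nlinarith [mul_self_nonneg (a x), mul_self_nonneg (b x)]


/-- On a finite-dimensional real symplectic vector space `(E, σ)` there exists a
compatible complex structure: a linear endomorphism `J` with `J ∘ J = -id`,
preserving `σ`, and such that `g(x, y) = σ(x, J y)` is symmetric positive definite. -/
theorem exists_compatible_complex_structure
    {E : Type*} [AddCommGroup E] [Module ℝ E] [FiniteDimensional ℝ E]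
    (σ : E →ₗ[ℝ] E →ₗ[ℝ] ℝ)
    (halt : ∀ x : E, σ x x = 0)
    (hnd : ∀ x : E, (∀ y : E, σ x y = 0) → x = 0) :
    ∃ J : E →ₗ[ℝ] E,
      (∀ x : E, J (J x) = -x) ∧
      (∀ x y : E, σ (J x) (J y) = σ x y) ∧
      (∀ x y : E, σ x (J y) = σ y (J x)) ∧
      (∀ x : E, x ≠ 0 → 0 < σ x (J x)) :=
  aux (Module.finrank ℝ E) E σ rfl halt hnd
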